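/- Let A ∈ ℍ^{n×n}, q a right eigenvalue, and λ_q the unique complex number with Im(λ_q) ≥ 0 similar to q. Then the geometric multiplicity g.m.(q,A) := dim_ℍ V_{[q]} satisfies: g.m.(q,A) = g.m.(λ_q, f(A)) if Im(λ_q) > 0, and g.m.(q,A) = (1/2)·g.m.(λ_q, f(A)) if λ_q is real. -/

import Mathlib

open Quaternion Matrix

noncomputable section

/-- The copy of a complex number inside the quaternions (span of 1 and i). -/
def toQ (z : ℂ) : ℍ[ℝ] := ⟨z.re, z.im, 0, 0⟩

/-- First complex component of a quaternion: a = c1 a + (c2 a)·j. -/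
def c1 (a : ℍ[ℝ]) : ℂ := ⟨a.re, a.imI⟩
/-- Second complex component of a quaternion. -/
def c2 (a : ℍ[ℝ]) : ℂ := ⟨a.imJ, a.imK⟩

/-- Similarity of quaternions: p = h⁻¹ q h for some nonzero h. -/
def qSimilar (p q : ℍ[ℝ]) : Prop := ∃ h : ℍ[ℝ], h ≠ 0 ∧ p = h⁻¹ * q * h

/-- q is a right eigenvalue of A. -/
def RightEig {n : ℕ} (A : Matrix (Fin n) (Fin n) ℍ[ℝ]) (q : ℍ[ℝ]) : Prop :=
  ∃ x : Fin n → ℍ[ℝ], x ≠ 0 ∧ A.mulVec x = fun i => x i * q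

/-- The complex adjoint matrix of a quaternion matrix. -/
def fAdj {n : ℕ} (A : Matrix (Fin n) (Fin n) ℍ[ℝ]) :
    Matrix (Fin n ⊕ Fin n) (Fin n ⊕ Fin n) ℂ :=
  Matrix.fromBlocks (A.map c1) (A.map c2)
    (-(A.map (fun a => starRingEnd ℂ (c2 a)))) (A.map (fun a => starRingEnd ℂ (c1 a)))

/-- Algebraic multiplicity of an eigenvalue of a complex matrix. -/
def algMult {m : Type*} [Fintype m] [DecidableEq m] (B : Matrix m m ℂ) (μ : ℂ) : ℕ :=
  (Matrix.charpoly B).rootMultiplicity μ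

/-- Geometric multiplicity of an eigenvalue of a complex matrix. -/
def geoMult {m : Type*} [Fintype m] [DecidableEq m] (B : Matrix m m ℂ) (μ : ℂ) : ℕ :=
  Module.finrank ℂ (LinearMap.ker (Matrix.mulVecLin (B - μ • 1)))

/-- The set of right q-eigenvectors (with 0). -/
def eigSet {n : ℕ} (A : Matrix (Fin n) (Fin n) ℍ[ℝ]) (q : ℍ[ℝ]) : Set (Fin n → ℍ[ℝ]) :=
  {x | A.mulVec x = fun i => x i * q}


/-- The [q]-eigenspace as a right ℍ-subspace of ℍⁿ. -/
def Vclass {n : ℕ} (A : Matrix (Fin n) (Fin n) ℍ[ℝ]) (q : ℍ[ℝ]) :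
    Submodule ℍ[ℝ]ᵐᵒᵖ (Fin n → ℍ[ℝ]) :=
  Submodule.span ℍ[ℝ]ᵐᵒᵖ (⋃ q' ∈ {p | qSimilar p q}, eigSet A q')

/-- geometric multiplicity -/
def gm {n : ℕ} (A : Matrix (Fin n) (Fin n) ℍ[ℝ]) (q : ℍ[ℝ]) : ℕ :=
  Module.finrank ℍ[ℝ]ᵐᵒᵖ (Vclass A q)

set_option synthInstance.maxHeartbeats 1000000
set_option maxHeartbeats 1000000

section Aux
open MulOpposite Complex

/-- the quaternion j -/
def jq : ℍ[ℝ] := ⟨0,0,1,0⟩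

@[simp] lemma c1_re (a : ℍ[ℝ]) : (c1 a).re = a.re := rfl
@[simp] lemma c1_im (a : ℍ[ℝ]) : (c1 a).im = a.imI := rfl
@[simp] lemma c2_re (a : ℍ[ℝ]) : (c2 a).re = a.imJ := rfl
@[simp] lemma c2_im (a : ℍ[ℝ]) : (c2 a).im = a.imK := rfl

lemma c1_mul (p r : ℍ[ℝ]) :
    c1 (p * r) = c1 p * c1 r - c2 p * (starRingEnd ℂ) (c2 r) := by
  apply Complex.ext <;>
    simp [Quaternion.re_mul, Quaternion.imI_mul] <;> ring

lemma c2_mul (p r : ℍ[ℝ]) :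
    c2 (p * r) = c1 p * c2 r + c2 p * (starRingEnd ℂ) (c1 r) := by
  apply Complex.ext <;>
    simp [Quaternion.imJ_mul, Quaternion.imK_mul] <;> ring

@[simp] lemma c1_toQ (z : ℂ) : c1 (toQ z) = z := by apply Complex.ext <;> simp [toQ] <;> rfl
@[simp] lemma c2_toQ (z : ℂ) : c2 (toQ z) = 0 := by apply Complex.ext <;> simp [toQ] <;> rfl

lemma toQ_mul_jq (z : ℂ) : toQ z * jq = ⟨0, 0, z.re, z.im⟩ := by
  apply Quaternion.ext <;> simp [Quaternion.re_mul, Quaternion.imI_mul, Quaternion.imJ_mul, Quaternion.imK_mul] <;> simp [toQ, jq]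

lemma quat_decomp (a : ℍ[ℝ]) : a = toQ (c1 a) + toQ (c2 a) * jq := by
  apply Quaternion.ext <;> simp only [Quaternion.re_add, Quaternion.imI_add, Quaternion.imJ_add, Quaternion.imK_add] <;> rw [toQ_mul_jq] <;> simp [toQ]

lemma mul_toQ_c1 (a : ℍ[ℝ]) (z : ℂ) : c1 (a * toQ z) = c1 a * z := by
  rw [c1_mul]; simp
lemma mul_toQ_c2 (a : ℍ[ℝ]) (z : ℂ) : c2 (a * toQ z) = c2 a * (starRingEnd ℂ) z := by
  rw [c2_mul]; simp
lemma mul_jq_c1 (a : ℍ[ℝ]) : c1 (a * jq) = -(c2 a) := by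
  apply Complex.ext <;> simp [Quaternion.re_mul, Quaternion.imI_mul] <;> simp [jq]
lemma mul_jq_c2 (a : ℍ[ℝ]) : c2 (a * jq) = c1 a := by
  apply Complex.ext <;> simp [Quaternion.imJ_mul, Quaternion.imK_mul] <;> simp [jq]

/-- c1 as a real-linear map -/
def c1L : ℍ[ℝ] →ₗ[ℝ] ℂ where
  toFun := c1
  map_add' a b := by apply Complex.ext <;> simp
  map_smul' r a := by apply Complex.ext <;> simp [Complex.real_smul]

def c2L : ℍ[ℝ] →ₗ[ℝ] ℂ where
  toFun := c2
  map_add' a b := by apply Complex.ext <;> simp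
  map_smul' r a := by apply Complex.ext <;> simp [Complex.real_smul]

@[simp] lemma c1L_apply (a : ℍ[ℝ]) : c1L a = c1 a := rfl
@[simp] lemma c2L_apply (a : ℍ[ℝ]) : c2L a = c2 a := rfl

end Aux
section Phi
open Complex

variable {n : ℕ}

/-- the complex coordinates map ℍⁿ → ℂ²ⁿ -/
def phiFun (x : Fin n → ℍ[ℝ]) : (Fin n ⊕ Fin n) → ℂ :=
  Sum.elim (fun i => c1 (x i)) (fun i => -((starRingEnd ℂ) (c2 (x i))))

def phi : (Fin n → ℍ[ℝ]) ≃ₗ[ℝ] ((Fin n ⊕ Fin n) → ℂ) where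
  toFun := phiFun
  invFun w := fun i => ⟨(w (Sum.inl i)).re, (w (Sum.inl i)).im,
      -((w (Sum.inr i)).re), (w (Sum.inr i)).im⟩
  map_add' x y := by
    funext s; cases s <;> simp [phiFun, map_add] <;> apply Complex.ext <;> simp <;> ring
  map_smul' r x := by
    funext s; cases s <;> simp [phiFun] <;> apply Complex.ext <;> simp [Complex.real_smul]
      <;> ring
  left_inv x := by
    funext i; apply Quaternion.ext <;> simp [phiFun]
  right_inv w := by
    funext s; cases s <;> apply Complex.ext <;> simp [phiFun, c1, c2]

lemma phi_apply_inl (x : Fin n → ℍ[ℝ]) (i : Fin n) : phi x (Sum.inl i) = c1 (x i) := rfl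
lemma phi_apply_inr (x : Fin n → ℍ[ℝ]) (i : Fin n) :
    phi x (Sum.inr i) = -((starRingEnd ℂ) (c2 (x i))) := rfl

lemma c1_sum {s : Finset (Fin n)} (f : Fin n → ℍ[ℝ]) :
    c1 (∑ j ∈ s, f j) = ∑ j ∈ s, c1 (f j) := map_sum c1L f s
lemma c2_sum {s : Finset (Fin n)} (f : Fin n → ℍ[ℝ]) :
    c2 (∑ j ∈ s, f j) = ∑ j ∈ s, c2 (f j) := map_sum c2L f s

/-- φ intertwines A·(-) with f(A)·(-). -/
lemma phi_mulVec (A : Matrix (Fin n) (Fin n) ℍ[ℝ]) (x : Fin n → ℍ[ℝ]) :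
    phi (A.mulVec x) = (fAdj A).mulVec (phi x) := by
  funext s
  have h1 : (phi x) ∘ Sum.inl = fun i => c1 (x i) := rfl
  have h2 : (phi x) ∘ Sum.inr = fun i => -((starRingEnd ℂ) (c2 (x i))) := rfl
  have key : (fAdj A).mulVec (phi x) = Sum.elim
      ((A.map c1).mulVec (fun i => c1 (x i)) +
        (A.map c2).mulVec (fun i => -((starRingEnd ℂ) (c2 (x i)))))
      ((-(A.map (fun a => starRingEnd ℂ (c2 a)))).mulVec (fun i => c1 (x i)) +
        (A.map (fun a => starRingEnd ℂ (c1 a))).mulVec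
          (fun i => -((starRingEnd ℂ) (c2 (x i))))) := by
    rw [fAdj, Matrix.fromBlocks_mulVec, h1, h2]
  rw [key]
  cases s with
  | inl i =>
    simp only [Sum.elim_inl, phi_apply_inl, Matrix.mulVec, Matrix.map_apply, dotProduct,
      Matrix.neg_apply, Pi.add_apply]
    rw [c1_sum]
    rw [← Finset.sum_add_distrib]
    refine Finset.sum_congr rfl fun j _ => ?_
    rw [c1_mul]; ring
  | inr i =>
    simp only [Sum.elim_inr, phi_apply_inr, Matrix.mulVec, Matrix.map_apply, dotProduct,
      Matrix.neg_apply, Pi.add_apply]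
    rw [c2_sum, map_sum, ← Finset.sum_neg_distrib, ← Finset.sum_add_distrib]
    refine Finset.sum_congr rfl fun j _ => ?_
    rw [c2_mul]
    simp only [map_add, _root_.map_mul, Complex.conj_conj]
    ring

/-- φ intertwines right mult by a complex scalar with scalar mult. -/
lemma phi_smul_toQ (x : Fin n → ℍ[ℝ]) (z : ℂ) :
    phi (fun i => x i * toQ z) = z • phi x := by
  funext s
  cases s with
  | inl i => simp [phi_apply_inl, mul_toQ_c1, mul_comm]
  | inr i => simp [phi_apply_inr, mul_toQ_c2, _root_.map_mul]; ring

/-- the conjugate-swap map J -/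
def Jmap (w : (Fin n ⊕ Fin n) → ℂ) : (Fin n ⊕ Fin n) → ℂ :=
  Sum.elim (fun i => (starRingEnd ℂ) (w (Sum.inr i)))
    (fun i => -((starRingEnd ℂ) (w (Sum.inl i))))

lemma phi_mul_jq (x : Fin n → ℍ[ℝ]) :
    phi (fun i => x i * jq) = Jmap (phi x) := by
  funext s
  cases s with
  | inl i => simp [phi_apply_inl, Jmap, phi_apply_inr, mul_jq_c1]
  | inr i => simp [phi_apply_inr, Jmap, phi_apply_inl, mul_jq_c2]

lemma Jmap_Jmap (w : (Fin n ⊕ Fin n) → ℂ) : Jmap (Jmap w) = -w := by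
  funext s; cases s <;> simp [Jmap]

lemma Jmap_smul (z : ℂ) (w : (Fin n ⊕ Fin n) → ℂ) :
    Jmap (z • w) = (starRingEnd ℂ) z • Jmap w := by
  funext s; cases s <;> simp [Jmap, _root_.map_mul] <;> ring

lemma Jmap_add (w v : (Fin n ⊕ Fin n) → ℂ) : Jmap (w + v) = Jmap w + Jmap v := by
  funext s; cases s <;> simp [Jmap, map_add] <;> ring

lemma mulVec_pointwise_mul (A : Matrix (Fin n) (Fin n) ℍ[ℝ]) (x : Fin n → ℍ[ℝ]) (h : ℍ[ℝ]) :
    A.mulVec (fun i => x i * h) = fun i => (A.mulVec x) i * h := by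
  funext i
  simp only [Matrix.mulVec, dotProduct, Finset.sum_mul, mul_assoc]

lemma fAdj_mulVec_Jmap (A : Matrix (Fin n) (Fin n) ℍ[ℝ]) (w : (Fin n ⊕ Fin n) → ℂ) :
    (fAdj A).mulVec (Jmap w) = Jmap ((fAdj A).mulVec w) := by
  set x := phi.symm w with hx
  have hw : w = phi x := by rw [hx, LinearEquiv.apply_symm_apply]
  rw [hw, ← phi_mul_jq, ← phi_mulVec, mulVec_pointwise_mul, phi_mul_jq, phi_mulVec]

end Phi
section Eig
open Complex MulOpposite

variable {n : ℕ}

lemma qSimilar_symm {p q : ℍ[ℝ]} (h : qSimilar p q) : qSimilar q p := by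
  obtain ⟨h₀, h0, hq⟩ := h
  refine ⟨h₀⁻¹, inv_ne_zero h0, ?_⟩
  rw [inv_inv, hq]
  rw [← mul_assoc, ← mul_assoc, mul_inv_cancel₀ h0, one_mul, mul_assoc q, mul_inv_cancel₀ h0, mul_one]

lemma qSimilar_trans {p q r : ℍ[ℝ]} (h1 : qSimilar p q) (h2 : qSimilar q r) :
    qSimilar p r := by
  obtain ⟨a, ha, rfl⟩ := h1
  obtain ⟨b, hb, rfl⟩ := h2
  refine ⟨b * a, mul_ne_zero hb ha, ?_⟩
  rw [_root_.mul_inv_rev]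
  simp [mul_assoc]

/-- membership in eigSet via phi -/
def Kker (A : Matrix (Fin n) (Fin n) ℍ[ℝ]) (μ : ℂ) : Submodule ℂ ((Fin n ⊕ Fin n) → ℂ) :=
  LinearMap.ker (Matrix.mulVecLin (fAdj A - μ • 1))

lemma mem_Kker {A : Matrix (Fin n) (Fin n) ℍ[ℝ]} {μ : ℂ} {w : (Fin n ⊕ Fin n) → ℂ} :
    w ∈ Kker A μ ↔ (fAdj A).mulVec w = μ • w := by
  rw [Kker, LinearMap.mem_ker, Matrix.mulVecLin_apply, Matrix.sub_mulVec,
    Matrix.smul_mulVec, Matrix.one_mulVec, sub_eq_zero]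

lemma geoMult_eq (A : Matrix (Fin n) (Fin n) ℍ[ℝ]) (μ : ℂ) :
    geoMult (fAdj A) μ = Module.finrank ℂ (Kker A μ) := rfl

lemma mem_eigSet_iff {A : Matrix (Fin n) (Fin n) ℍ[ℝ]} {μ : ℂ} {x : Fin n → ℍ[ℝ]} :
    x ∈ eigSet A (toQ μ) ↔ phi x ∈ Kker A μ := by
  rw [eigSet, Set.mem_setOf_eq, mem_Kker, ← phi_mulVec, ← phi_smul_toQ]
  exact ⟨fun h => by rw [h], fun h => phi.injective h⟩

lemma Jmap_Kker {A : Matrix (Fin n) (Fin n) ℍ[ℝ]} {μ : ℂ} {w : (Fin n ⊕ Fin n) → ℂ}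
    (hw : w ∈ Kker A μ) : Jmap w ∈ Kker A ((starRingEnd ℂ) μ) := by
  rw [mem_Kker] at hw ⊢
  rw [fAdj_mulVec_Jmap, hw, Jmap_smul]

/-- Vclass is the ℍᵒᵖ-span of the eigenvectors for toQ λ itself. -/
lemma Vclass_eq_span {A : Matrix (Fin n) (Fin n) ℍ[ℝ]} {q : ℍ[ℝ]} {lq : ℂ}
    (hsim : qSimilar q (toQ lq)) :
    Vclass A q = Submodule.span ℍ[ℝ]ᵐᵒᵖ (eigSet A (toQ lq)) := by
  apply le_antisymm
  · rw [Vclass, Submodule.span_le]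
    rintro x hx
    simp only [Set.mem_iUnion] at hx
    obtain ⟨q', hq', hx⟩ := hx
    have hq'l : qSimilar q' (toQ lq) := qSimilar_trans hq' hsim
    obtain ⟨h, h0, rfl⟩ := hq'l
    have hy : (fun i => x i * h⁻¹) ∈ eigSet A (toQ lq) := by
      rw [eigSet, Set.mem_setOf_eq, mulVec_pointwise_mul]
      rw [eigSet, Set.mem_setOf_eq] at hx
      rw [hx]
      funext i
      simp [mul_assoc, mul_inv_cancel₀ h0]
    have : x = op h • (fun i => x i * h⁻¹) := by
      funext i
      simp [MulOpposite.smul_eq_mul_unop, mul_assoc, inv_mul_cancel₀ h0]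
    rw [this]
    exact Submodule.smul_mem _ _ (Submodule.subset_span hy)
  · apply Submodule.span_mono
    intro x hx
    simp only [Set.mem_iUnion]
    exact ⟨toQ lq, qSimilar_symm hsim, hx⟩

end Eig
section Wsub
open Complex MulOpposite

variable {n : ℕ}

lemma phi_smul_quat (x : Fin n → ℍ[ℝ]) (h : ℍ[ℝ]) :
    phi (fun i => x i * h) = (c1 h) • phi x + Jmap ((c2 h) • phi x) := by
  have hdecomp : (fun i => x i * h) =
      (fun i => x i * toQ (c1 h)) + fun i => (x i * toQ (c2 h)) * jq := by
    funext i
    show x i * h = x i * toQ (c1 h) + (x i * toQ (c2 h)) * jq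
    rw [mul_assoc, ← left_distrib, ← quat_decomp]
  rw [hdecomp, map_add, phi_smul_toQ, phi_mul_jq, phi_smul_toQ]

/-- The preimage of a J-stable complex subspace is a right ℍ-subspace. -/
def Wsub (K : Submodule ℂ ((Fin n ⊕ Fin n) → ℂ)) (hJ : ∀ w ∈ K, Jmap w ∈ K) :
    Submodule ℍ[ℝ]ᵐᵒᵖ (Fin n → ℍ[ℝ]) where
  carrier := {x | phi x ∈ K}
  add_mem' := by
    intro a b ha hb
    simp only [Set.mem_setOf_eq, map_add] at *
    exact K.add_mem ha hb
  zero_mem' := by simp only [Set.mem_setOf_eq, map_zero]; exact K.zero_mem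
  smul_mem' := by
    intro c x hx
    simp only [Set.mem_setOf_eq] at *
    have hcx : c • x = fun i => x i * unop c := by
      funext i; rfl
    rw [hcx, phi_smul_quat]
    exact K.add_mem (K.smul_mem _ hx) (hJ _ (K.smul_mem _ hx))

lemma mem_Wsub {K : Submodule ℂ ((Fin n ⊕ Fin n) → ℂ)} {hJ : ∀ w ∈ K, Jmap w ∈ K}
    {x : Fin n → ℍ[ℝ]} : x ∈ Wsub K hJ ↔ phi x ∈ K := Iff.rfl

lemma Jmap_sup_mem {A : Matrix (Fin n) (Fin n) ℍ[ℝ]} {lq : ℂ} :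
    ∀ w ∈ Kker A lq ⊔ Kker A ((starRingEnd ℂ) lq),
      Jmap w ∈ Kker A lq ⊔ Kker A ((starRingEnd ℂ) lq) := by
  intro w hw
  rw [Submodule.mem_sup] at hw ⊢
  obtain ⟨y, hy, z, hz, rfl⟩ := hw
  refine ⟨Jmap z, ?_, Jmap y, ?_, by rw [Jmap_add]; ring⟩
  · have := Jmap_Kker hz; rwa [Complex.conj_conj] at this
  · exact Jmap_Kker hy

/-- central lemma: the image of V_{[q]} under φ is the sum of the two kernels -/
lemma map_Vclass {A : Matrix (Fin n) (Fin n) ℍ[ℝ]} {q : ℍ[ℝ]} {lq : ℂ}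
    (hsim : qSimilar q (toQ lq)) :
    Submodule.map (phi.toLinearMap) ((Vclass A q).restrictScalars ℝ) =
      Submodule.restrictScalars ℝ (Kker A lq ⊔ Kker A ((starRingEnd ℂ) lq)) := by
  apply le_antisymm
  · rintro _ ⟨x, hx, rfl⟩
    have hVW : Vclass A q ≤ Wsub (Kker A lq ⊔ Kker A ((starRingEnd ℂ) lq)) Jmap_sup_mem := by
      rw [Vclass_eq_span hsim, Submodule.span_le]
      intro y hy
      rw [SetLike.mem_coe, mem_Wsub]
      exact Submodule.mem_sup_left (mem_eigSet_iff.mp hy)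
    exact hVW hx
  · intro w hw
    rw [Submodule.restrictScalars_mem, Submodule.mem_sup] at hw
    obtain ⟨y, hy, z, hz, rfl⟩ := hw
    have hVS : eigSet A (toQ lq) ⊆ (Vclass A q : Set _) := by
      rw [Vclass_eq_span hsim]; exact Submodule.subset_span
    apply Submodule.add_mem
    · -- y ∈ Kker lq
      refine ⟨phi.symm y, ?_, by simp⟩
      apply hVS
      exact mem_eigSet_iff.mpr (by rwa [LinearEquiv.apply_symm_apply])
    · -- z ∈ Kker (conj lq): z = - Jmap (Jmap z), Jmap z ∈ Kker lq
      have hJz : Jmap z ∈ Kker A lq := by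
        have := Jmap_Kker hz; rwa [Complex.conj_conj] at this
      set x0 : Fin n → ℍ[ℝ] := phi.symm (Jmap z) with hx0
      have hx0mem : x0 ∈ eigSet A (toQ lq) := by
        exact mem_eigSet_iff.mpr (by rwa [hx0, LinearEquiv.apply_symm_apply])
      have hph : phi (fun i => x0 i * jq) = -z := by
        rw [phi_mul_jq, hx0, LinearEquiv.apply_symm_apply, Jmap_Jmap]
      refine ⟨-(fun i => x0 i * jq), ?_, by simp only [LinearEquiv.coe_coe, map_neg]; rw [hph, neg_neg]⟩
      apply Submodule.neg_mem
      have : (fun i => x0 i * jq) = op jq • x0 := by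
        funext i; rfl
      rw [Submodule.restrictScalars_mem, this]
      exact Submodule.smul_mem _ _ (hVS hx0mem)

end Wsub
section Dim
open Complex MulOpposite

variable {n : ℕ}

/-- Jmap as a real-linear equivalence. -/
def JL : ((Fin n ⊕ Fin n) → ℂ) ≃ₗ[ℝ] ((Fin n ⊕ Fin n) → ℂ) where
  toFun := Jmap
  invFun w := -(Jmap w)
  map_add' := Jmap_add
  map_smul' r w := by
    show Jmap (r • w) = r • Jmap w
    have : (r : ℂ) • w = r • w := by
      funext s; simp [Complex.real_smul]
    rw [← this, Jmap_smul, Complex.conj_ofReal]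
    funext s; simp [Complex.real_smul]
  left_inv w := by
    show -(Jmap (Jmap w)) = w
    rw [Jmap_Jmap, neg_neg]
  right_inv w := by
    show Jmap (-(Jmap w)) = w
    have : -(Jmap w) = Jmap (-w) := by
      funext s; cases s <;> simp [Jmap]
    rw [this, Jmap_Jmap, neg_neg]

lemma JL_map_Kker (A : Matrix (Fin n) (Fin n) ℍ[ℝ]) (μ : ℂ) :
    Submodule.map (JL.toLinearMap) ((Kker A μ).restrictScalars ℝ) =
      (Kker A ((starRingEnd ℂ) μ)).restrictScalars ℝ := by
  apply le_antisymm
  · rintro _ ⟨w, hw, rfl⟩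
    exact Jmap_Kker hw
  · intro w hw
    have h1 : -(Jmap w) ∈ Kker A μ := by
      have := Jmap_Kker (Submodule.restrictScalars_mem ℝ _ _ |>.mp hw)
      rw [Complex.conj_conj] at this
      exact Submodule.neg_mem _ this
    refine ⟨-(Jmap w), h1, ?_⟩
    show Jmap (-(Jmap w)) = w
    have : -(Jmap w) = Jmap (-w) := by funext s; cases s <;> simp [Jmap]
    rw [this, Jmap_Jmap, neg_neg]

lemma finrank_Kker_conj (A : Matrix (Fin n) (Fin n) ℍ[ℝ]) (μ : ℂ) :
    Module.finrank ℝ ((Kker A ((starRingEnd ℂ) μ)).restrictScalars ℝ) =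
      Module.finrank ℝ ((Kker A μ).restrictScalars ℝ) := by
  rw [← JL_map_Kker]
  exact LinearEquiv.finrank_map_eq JL _

lemma finrank_restrict_complex (K : Submodule ℂ ((Fin n ⊕ Fin n) → ℂ)) :
    Module.finrank ℝ (K.restrictScalars ℝ) = 2 * Module.finrank ℂ K := by
  have e : (K.restrictScalars ℝ) ≃ₗ[ℝ] K :=
    (Submodule.restrictScalarsEquiv ℝ ℂ _ K).restrictScalars ℝ
  rw [e.finrank_eq, ← Module.finrank_mul_finrank ℝ ℂ K, Complex.finrank_real_complex]

lemma finrank_quat_op : Module.finrank ℝ (ℍ[ℝ]ᵐᵒᵖ) = 4 := by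
  rw [← (MulOpposite.opLinearEquiv ℝ (M := ℍ[ℝ])).finrank_eq]
  exact Quaternion.finrank_eq_four

lemma finrank_restrict_quat (p : Submodule ℍ[ℝ]ᵐᵒᵖ (Fin n → ℍ[ℝ])) :
    Module.finrank ℝ (p.restrictScalars ℝ) = 4 * Module.finrank ℍ[ℝ]ᵐᵒᵖ p := by
  have e : (p.restrictScalars ℝ) ≃ₗ[ℝ] p :=
    (Submodule.restrictScalarsEquiv ℝ ℍ[ℝ]ᵐᵒᵖ _ p).restrictScalars ℝ
  rw [e.finrank_eq, ← Module.finrank_mul_finrank ℝ ℍ[ℝ]ᵐᵒᵖ p, finrank_quat_op]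

lemma Kker_disjoint {A : Matrix (Fin n) (Fin n) ℍ[ℝ]} {μ ν : ℂ} (hμν : μ ≠ ν) :
    Kker A μ ⊓ Kker A ν = ⊥ := by
  rw [eq_bot_iff]
  rintro w ⟨hw1, hw2⟩
  rw [SetLike.mem_coe, mem_Kker] at hw1 hw2
  have : (μ - ν) • w = 0 := by rw [sub_smul, hw1.symm.trans hw2, sub_self]
  rcases smul_eq_zero.mp this with h | h
  · exact absurd (sub_eq_zero.mp h) hμν
  · simp [h]

end Dim
/-- The geometric multiplicity g.m.(q,A) = dim_ℍ V_{[q]} equals g.m.(λ_q, f(A)) when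
Im λ_q > 0, and half of it when λ_q is real. -/
theorem geoMult_eq_complex {n : ℕ} (A : Matrix (Fin n) (Fin n) ℍ[ℝ])
    (q : ℍ[ℝ]) (hq : RightEig A q) (lq : ℂ) (him : 0 ≤ lq.im)
    (hsim : qSimilar q (toQ lq)) :
    (0 < lq.im → gm A q = geoMult (fAdj A) lq) ∧
    (lq.im = 0 → 2 * gm A q = geoMult (fAdj A) lq) := by
  have hmap := map_Vclass (A := A) hsim
  have h4 : Module.finrank ℝ ((Vclass A q).restrictScalars ℝ) = 4 * gm A q :=
    finrank_restrict_quat _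
  have hfr : Module.finrank ℝ ((Vclass A q).restrictScalars ℝ)
      = Module.finrank ℝ
        ((Kker A lq ⊔ Kker A ((starRingEnd ℂ) lq)).restrictScalars ℝ) := by
    rw [← hmap, LinearEquiv.finrank_map_eq]
  constructor
  · intro hpos
    have hne : lq ≠ (starRingEnd ℂ) lq := by
      intro h
      have h2 : lq.im = -lq.im := by
        conv_lhs => rw [h]
        exact Complex.conj_im lq
      linarith
    have hdisj := Kker_disjoint (A := A) hne
    have hsumeq := Submodule.finrank_sup_add_finrank_inf_eq
      (Kker A lq) (Kker A ((starRingEnd ℂ) lq))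
    rw [hdisj] at hsumeq
    simp only [finrank_bot, add_zero] at hsumeq
    have hKconj : Module.finrank ℂ (Kker A ((starRingEnd ℂ) lq))
        = Module.finrank ℂ (Kker A lq) := by
      have h1 := finrank_Kker_conj A lq
      have h2 := finrank_restrict_complex (Kker A ((starRingEnd ℂ) lq))
      have h3 := finrank_restrict_complex (Kker A lq)
      omega
    have h5 := finrank_restrict_complex (Kker A lq ⊔ Kker A ((starRingEnd ℂ) lq))
    rw [geoMult_eq]
    omega
  · intro hzero
    have hconj : (starRingEnd ℂ) lq = lq := Complex.conj_eq_iff_im.mpr hzero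
    rw [hconj, sup_idem] at hfr
    have h5 := finrank_restrict_complex (Kker A lq)
    rw [geoMult_eq]
    omega
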